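/- With G_2 and f as defined (f(θ)=2 for θ≤1, f(θ)=θ+1/θ for θ≥1), G_2(θ) < f(θ) for all θ > 0. The key inequality is θ^4/(1+θ^2)^3 < 1/5 for all θ > 0. -/

import Mathlib

noncomputable def f (x : ℝ) : ℝ := if x < 1 then 2 else x + 1 / x

lemma keypoly (s : ℝ) (h0 : 0 < s) (h1 : s < 6) :
    0 < 46656 + 279936*s + 699840*s^2 + 933120*s^3 - 1461060*s^4 + 1000236*s^5 - 13369*s^6 := by
  nlinarith [mul_nonneg (pow_nonneg h0.le 5) (by linarith : (0:ℝ) ≤ 6 - s),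
    mul_nonneg (pow_nonneg h0.le 3) (sq_nonneg (920022*s - 730530)),
    pow_nonneg h0.le 3, sq_nonneg s]

lemma keypoly' (x : ℝ) (h0 : 0 < x) (h1 : x < 6/7) :
    25*x^2*(6-7*x)^4 < 46656*(1-x)^6 := by
  have h := keypoly (6-7*x) (by linarith) (by linarith)
  nlinarith [h]

lemma Laux1 (θ x : ℝ) (hθ1 : θ < 1) (hp : 0 < 2-2*x) (hx34 : x ≤ 3/4) :
    θ*(2-2*x) < 2*(2-7*x/3) := by
  nlinarith [mul_lt_mul_of_pos_right hθ1 hp]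

lemma Laux2 (θ x A : ℝ) (hv : 0 < θ) (h6 : 36*A*(θ*(1-x)^2) < 4*θ*A^2)
    (hA : 0 < A) : 9*A*(1-x)^2 < A^2 := by
  nlinarith [h6, hv, hA]

lemma Laux3 (θ x : ℝ) (hθ : 0 < θ) (hθ1 : 1 ≤ θ) (hmain : θ^2*x < 6-7*x) :
    θ*(2-2*x)*θ < (1+θ^2)*(2-7*x/3) := by nlinarith [hmain]

set_option maxHeartbeats 2000000 in
theorem stmt12 (θ : ℝ) (hθ : 0 < θ) (x₁ : ℝ) (hx₁ : x₁ ∈ Set.Ioo (0 : ℝ) (6 / 7))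
    (heq : (6 - 7 * x₁) ^ ((7 : ℝ) / 3) / (x₁ ^ ((1 : ℝ) / 3) * (1 - x₁) ^ 2)
      = 36 * θ ^ 2 / (5 : ℝ) ^ ((2 : ℝ) / 3)) :
    θ * (2 - 2 * x₁) / (2 - 7 * x₁ / 3) < f θ ∧
    θ ^ 4 / (1 + θ ^ 2) ^ 3 < 1 / 5 := by
  obtain ⟨hx0, hx6⟩ := hx₁
  have ha : (0:ℝ) < 6 - 7 * x₁ := by linarith
  have hx1 : x₁ < 1 := by linarith
  set a := 6 - 7 * x₁ with ha_def
  set u := a ^ ((1:ℝ)/3) with hu_def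
  set v := x₁ ^ ((1:ℝ)/3) with hv_def
  set w := (5:ℝ) ^ ((1:ℝ)/3) with hw_def
  have hu : 0 < u := Real.rpow_pos_of_pos ha _
  have hv : 0 < v := Real.rpow_pos_of_pos hx0 _
  have hw : 0 < w := Real.rpow_pos_of_pos (by norm_num) _
  have hu3 : u ^ 3 = a := by
    rw [hu_def, ← Real.rpow_natCast (a ^ ((1:ℝ)/3)) 3, ← Real.rpow_mul ha.le]
    norm_num
  have hv3 : v ^ 3 = x₁ := by
    rw [hv_def, ← Real.rpow_natCast (x₁ ^ ((1:ℝ)/3)) 3, ← Real.rpow_mul hx0.le]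
    norm_num
  have hw3 : w ^ 3 = 5 := by
    rw [hw_def, ← Real.rpow_natCast ((5:ℝ) ^ ((1:ℝ)/3)) 3, ← Real.rpow_mul (by norm_num)]
    norm_num
  have hu7 : a ^ ((7:ℝ)/3) = u ^ 7 := by
    rw [hu_def, ← Real.rpow_natCast (a ^ ((1:ℝ)/3)) 7, ← Real.rpow_mul ha.le]
    norm_num
  have hw2 : (5:ℝ) ^ ((2:ℝ)/3) = w ^ 2 := by
    rw [hw_def, ← Real.rpow_natCast ((5:ℝ) ^ ((1:ℝ)/3)) 2, ← Real.rpow_mul (by norm_num)]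
    norm_num
  rw [hu7, hw2] at heq
  clear_value a u v w
  have h1x : (0:ℝ) < (1 - x₁) ^ 2 := pow_pos (by linarith) 2
  -- key equation
  have hkey : w ^ 2 * u ^ 7 = 36 * θ ^ 2 * (v * (1 - x₁) ^ 2) := by
    have hne : v * (1 - x₁) ^ 2 ≠ 0 := by positivity
    have hne2 : w ^ 2 ≠ 0 := by positivity
    field_simp at heq
    rw [div_eq_iff (ne_of_gt h1x)] at heq
    linear_combination heq
  have hpoly := keypoly' x₁ hx0 hx6
  -- θ^2 * x₁ < a
  have hcube : (w^2 * u^4 * v^2) ^ 3 < (36 * (1 - x₁)^2) ^ 3 := by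
    have e1 : (w^2 * u^4 * v^2) ^ 3 = (w^3)^2 * (u^3)^4 * (v^3)^2 := by ring
    rw [e1, hw3, hu3, hv3, ha_def]
    nlinarith [hpoly]
  have hQ : w^2 * u^4 * v^2 < 36 * (1 - x₁)^2 :=
    lt_of_pow_lt_pow_left₀ 3 (by positivity) hcube
  have e2 : (θ^2*x₁) * (36*(1-x₁)^2) = u^3 * (w^2 * u^4 * v^2) := by
    linear_combination (-(v^2)) * hkey - 36*θ^2*(1-x₁)^2 * hv3
  have h8 : (θ^2*x₁) * (36*(1-x₁)^2) < a * (36*(1-x₁)^2) := by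
    calc (θ^2*x₁) * (36*(1-x₁)^2) = u^3 * (w^2*u^4*v^2) := e2
    _ < u^3 * (36*(1-x₁)^2) := mul_lt_mul_of_pos_left hQ (pow_pos hu 3)
    _ = a * (36*(1-x₁)^2) := by rw [hu3]
  have hmain : θ ^ 2 * x₁ < a :=
    lt_of_mul_lt_mul_right h8 (by positivity)
  have hd : (0:ℝ) < 2 - 7 * x₁ / 3 := by linarith
  constructor
  · rcases lt_or_ge θ 1 with hθ1 | hθ1
    · -- case θ < 1, f θ = 2
      rw [f, if_pos hθ1, div_lt_iff₀ hd]
      rcases le_or_gt x₁ (3/4) with hx34 | hx34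
      · exact Laux1 θ x₁ hθ1 (by linarith) hx34
      · -- x₁ > 3/4
        have hc : (w^2 * u)^3 < (4*v)^3 := by
          have e3 : (w^2*u)^3 = (w^3)^2 * u^3 := by ring
          have e4 : (4*v)^3 = 64 * v^3 := by ring
          rw [e3, e4, hw3, hu3, hv3, ha_def]
          nlinarith
        have hQ2 : w^2 * u < 4 * v := lt_of_pow_lt_pow_left₀ 3 (by positivity) hc
        have h5 : w^2 * u^7 < 4 * v * u^6 := by
          have h := mul_lt_mul_of_pos_right hQ2 (pow_pos hu 6)
          ring_nf at h ⊢
          linarith [h]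
        have h6 : 36 * θ^2 * (v * (1-x₁)^2) < 4 * v * a^2 := by
          rw [← hkey]
          have h7 : a^2 = u^6 := by rw [← hu3]; ring
          rw [h7]; exact h5
        have h9 : 9 * θ^2 * (1-x₁)^2 < a^2 := by
          have h6' : 36*θ^2*(v*(1-x₁)^2) = 36*(θ^2)*(v*(1-x₁)^2) := by ring
          nlinarith [h6, hv, sq_nonneg θ]
        have h3θ : 3 * θ * (1 - x₁) < a := by
          have hsq : (3*θ*(1-x₁))^2 < a^2 := by nlinarith [h9]
          exact lt_of_pow_lt_pow_left₀ 2 ha.le hsq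
        rw [ha_def] at h3θ
        linarith
    · -- case θ ≥ 1
      rw [f, if_neg (not_lt.mpr hθ1)]
      have hfe : θ + 1/θ = (1 + θ^2)/θ := by field_simp; ring
      rw [hfe, div_lt_div_iff₀ hd hθ]
      rw [ha_def] at hmain
      exact Laux3 θ x₁ hθ hθ1 hmain
  · rw [div_lt_div_iff₀ (by positivity) (by norm_num)]
    nlinarith [sq_nonneg θ, sq_nonneg (θ^2 - 1), hθ.le]
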